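/- Let x_1, …, x_N be unit vectors in ℝ² with Gram matrix A (so A_{ij} = ⟨x_i, x_j⟩), and let p ∈ (0, 1.3]. Then E_p(A) = ∑_{i≠j} |A_{ij}|^p ≥ N(N−2)/2 if N is even, and E_p(A) ≥ (N−1)²/2 if N is odd. -/

import Mathlib

set_option maxHeartbeats 1600000

open RealInnerProductSpace



private lemma aux_pointwise (p t : ℝ) (hp0 : 0 < p) (hp : p ≤ 1.3) (ht : t ^ 2 ≤ 1) :
    t ^ 2 + (2 - p) / 2 * (t ^ 2 * (1 - t ^ 2)) ≤ |t| ^ p := by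
  have ha0 : 0 ≤ |t| := abs_nonneg t
  have ha2 : |t| ^ 2 = t ^ 2 := sq_abs t
  have ha1 : |t| ≤ 1 := by nlinarith [sq_abs t]
  rcases eq_or_lt_of_le ha0 with h0 | h0
  · have : t = 0 := by simpa using h0.symm
    simp [this, Real.zero_rpow hp0.ne']
  · set a := |t| with hadef
    have hsplit : a ^ p = a ^ 2 * a ^ (p - 2) := by
      rw [← Real.rpow_natCast a 2, ← Real.rpow_add h0]
      norm_num
    have hlog : Real.log a ≤ a - 1 := Real.log_le_sub_one_of_pos h0
    have hexp : 1 + Real.log a * (p - 2) ≤ a ^ (p - 2) := by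
      rw [Real.rpow_def_of_pos h0]
      have := Real.add_one_le_exp (Real.log a * (p - 2))
      linarith [this]
    have h1 : 1 + (2 - p) * (1 - a) ≤ a ^ (p - 2) := by
      have : (p - 2) * (a - 1) ≤ (p - 2) * Real.log a := by
        apply mul_le_mul_of_nonpos_left hlog (by linarith)
      nlinarith
    have h2 : 1 + (2 - p) / 2 * (1 - a ^ 2) ≤ a ^ (p - 2) := by
      nlinarith [mul_nonneg (by linarith : (0:ℝ) ≤ 2 - p)
        (mul_nonneg (by linarith : (0:ℝ) ≤ 1 - a) (by linarith : (0:ℝ) ≤ 1 - a))]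
    calc t ^ 2 + (2 - p) / 2 * (t ^ 2 * (1 - t ^ 2))
        = a ^ 2 * (1 + (2 - p) / 2 * (1 - a ^ 2)) := by rw [ha2]; ring
      _ ≤ a ^ 2 * a ^ (p - 2) := by
          apply mul_le_mul_of_nonneg_left h2 (by positivity)
      _ = a ^ p := hsplit.symm

private lemma real_rpow_subadd {x y r : ℝ} (hx : 0 ≤ x) (hy : 0 ≤ y) (hr0 : 0 ≤ r)
    (hr1 : r ≤ 1) : (x + y) ^ r ≤ x ^ r + y ^ r := by
  have h := NNReal.rpow_add_le_add_rpow x.toNNReal y.toNNReal hr0 hr1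
  have h2 := NNReal.coe_le_coe.2 h
  push_cast [NNReal.coe_rpow, Real.coe_toNNReal x hx, Real.coe_toNNReal y hy] at h2
  exact h2

private lemma auxNL1 : (0.46 : ℝ) ^ (0.35 : ℝ) ≤ 10 / 13 := by
  have key : ((0.46 : ℝ) ^ (0.35 : ℝ)) ^ (20 : ℕ) = (0.46 : ℝ) ^ (7 : ℕ) := by
    rw [← Real.rpow_natCast ((0.46 : ℝ) ^ (0.35 : ℝ)) 20, ← Real.rpow_mul (by norm_num),
      ← Real.rpow_natCast (0.46 : ℝ) 7]
    norm_num
  have h0 : (0 : ℝ) ≤ (0.46 : ℝ) ^ (0.35 : ℝ) := Real.rpow_nonneg (by norm_num) _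
  apply le_of_pow_le_pow_left₀ (n := 20) (by norm_num) (by norm_num)
  rw [key]
  norm_num

private lemma auxNL2 : (0.54 : ℝ) ^ (0.7 : ℝ) ≤ 0.685 := by
  have key : ((0.54 : ℝ) ^ (0.7 : ℝ)) ^ (10 : ℕ) = (0.54 : ℝ) ^ (7 : ℕ) := by
    rw [← Real.rpow_natCast ((0.54 : ℝ) ^ (0.7 : ℝ)) 10, ← Real.rpow_mul (by norm_num),
      ← Real.rpow_natCast (0.54 : ℝ) 7]
    norm_num
  apply le_of_pow_le_pow_left₀ (n := 10) (by norm_num) (by norm_num)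
  rw [key]
  norm_num

private lemma aux_superadd {ι : Type*} (F : Finset ι) (f : ι → ℝ) (h0 : ∀ i ∈ F, 0 ≤ f i)
    (h1 : ∑ i ∈ F, f i ≤ 1) :
    ∑ i ∈ F, (1 - Real.sqrt (1 - f i)) ≤ 1 - Real.sqrt (1 - ∑ i ∈ F, f i) := by
  induction F using Finset.cons_induction with
  | empty => simp
  | cons a F ha IH =>
    rw [Finset.sum_cons] at h1 ⊢
    rw [Finset.sum_cons]
    have hx0 : 0 ≤ f a := h0 a (Finset.mem_cons_self a F)
    have hS0 : 0 ≤ ∑ i ∈ F, f i :=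
      Finset.sum_nonneg fun i hi => h0 i (Finset.mem_cons_of_mem hi)
    have hIH : ∑ i ∈ F, (1 - Real.sqrt (1 - f i)) ≤ 1 - Real.sqrt (1 - ∑ i ∈ F, f i) :=
      IH (fun i hi => h0 i (Finset.mem_cons_of_mem hi)) (by linarith)
    set x := f a
    set S := ∑ i ∈ F, f i
    have hA := Real.sq_sqrt (by linarith : (0:ℝ) ≤ 1 - x)
    have hB := Real.sq_sqrt (by linarith : (0:ℝ) ≤ 1 - S)
    have hC := Real.sq_sqrt (by linarith : (0:ℝ) ≤ 1 - (x + S))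
    have hA0 := Real.sqrt_nonneg (1 - x)
    have hB0 := Real.sqrt_nonneg (1 - S)
    have hC0 := Real.sqrt_nonneg (1 - (x + S))
    have hAB : Real.sqrt (1 - (x + S)) ≤ Real.sqrt (1 - x) * Real.sqrt (1 - S) := by
      rw [← Real.sqrt_mul (by linarith : (0:ℝ) ≤ 1 - x)]
      apply Real.sqrt_le_sqrt
      nlinarith
    have key : 1 + Real.sqrt (1 - (x + S)) ≤ Real.sqrt (1 - x) + Real.sqrt (1 - S) := by
      nlinarith [sq_nonneg (Real.sqrt (1 - x) + Real.sqrt (1 - S))]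
    linarith

private lemma aux_pm (N : ℕ) (hodd : Odd N) (ε : Fin N → ℝ)
    (hε : ∀ i, ε i = 1 ∨ ε i = -1) : 1 ≤ |∑ i, ε i| := by
  classical
  set T := Finset.univ.filter (fun i => ε i = -1) with hT
  have hsum : ∑ i, ε i = (N : ℝ) - 2 * T.card := by
    rw [← Finset.sum_filter_add_sum_filter_not Finset.univ (fun i => ε i = -1)]
    have h1 : ∑ i ∈ T, ε i = -(T.card : ℝ) := by
      rw [Finset.sum_congr rfl (fun i hi => (Finset.mem_filter.mp hi).2)]
      simp [hT]
    have h2 : ∑ i ∈ Finset.univ.filter (fun i => ¬ε i = -1), ε i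
        = ((Finset.univ.filter (fun i => ¬ε i = -1)).card : ℝ) := by
      have hall : ∀ i ∈ Finset.univ.filter (fun i => ¬ε i = -1), ε i = 1 := by
        intro i hi
        rcases hε i with h | h
        · exact h
        · exact absurd h (Finset.mem_filter.mp hi).2
      rw [Finset.sum_congr rfl hall, Finset.sum_const, nsmul_eq_mul, mul_one]
    rw [h1, h2]
    have hcard : T.card + (Finset.univ.filter (fun i => ¬ε i = -1)).card = N := by
      rw [hT, Finset.card_filter_add_card_filter_not]
      simp
    have : ((Finset.univ.filter (fun i => ¬ε i = -1)).card : ℝ) = (N : ℝ) - T.card := by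
      have := congrArg (fun n : ℕ => (n : ℝ)) hcard
      push_cast at this
      linarith
    rw [this]; ring
  rw [hsum]
  have hne : N ≠ 2 * T.card := by
    intro h
    rcases hodd with ⟨m, hm⟩
    omega
  rcases Nat.lt_or_ge N (2 * T.card) with h | h
  · have h' : N + 1 ≤ 2 * T.card := h
    rw [abs_sub_comm, le_abs]
    left
    push_cast
    have : (N : ℝ) + 1 ≤ 2 * (T.card : ℝ) := by exact_mod_cast h'
    linarith
  · have h' : 2 * T.card + 1 ≤ N := by omega
    rw [le_abs]
    left
    have : 2 * (T.card : ℝ) + 1 ≤ (N : ℝ) := by exact_mod_cast h'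
    linarith

private lemma aux_eigen (P Q R : ℝ) :
    ∃ e1 e2 μ : ℝ, e1 ^ 2 + e2 ^ 2 = 1 ∧ μ = P * e1 ^ 2 + 2 * R * (e1 * e2) + Q * e2 ^ 2 ∧
      μ * ((P + Q) - μ) = P * Q - R ^ 2 ∧ 2 * μ ≤ P + Q := by
  set D := Real.sqrt ((P - Q) ^ 2 + 4 * R ^ 2) with hDdef
  have hD2 : D ^ 2 = (P - Q) ^ 2 + 4 * R ^ 2 := Real.sq_sqrt (by positivity)
  have hD0 : 0 ≤ D := Real.sqrt_nonneg _
  set μ := (P + Q - D) / 2 with hμdef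
  have hchar : μ ^ 2 - (P + Q) * μ + (P * Q - R ^ 2) = 0 := by
    rw [hμdef]
    linear_combination hD2 / 4
  have hform : μ * ((P + Q) - μ) = P * Q - R ^ 2 := by linear_combination -hchar
  have h2μ : 2 * μ ≤ P + Q := by rw [hμdef]; linarith
  by_cases hR : R = 0
  · rcases le_total P Q with hPQ | hPQ
    · refine ⟨1, 0, μ, by norm_num, ?_, hform, h2μ⟩
      have : D = Q - P := by
        rw [hDdef, hR]
        rw [show (P - Q) ^ 2 + 4 * 0 ^ 2 = (Q - P) ^ 2 by ring]
        exact Real.sqrt_sq (by linarith)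
      rw [hμdef, this, hR]; ring
    · refine ⟨0, 1, μ, by norm_num, ?_, hform, h2μ⟩
      have : D = P - Q := by
        rw [hDdef, hR]
        rw [show (P - Q) ^ 2 + 4 * 0 ^ 2 = (P - Q) ^ 2 by ring]
        exact Real.sqrt_sq (by linarith)
      rw [hμdef, this, hR]; ring
  · have hn2 : 0 < R ^ 2 + (μ - P) ^ 2 := by positivity
    set n := Real.sqrt (R ^ 2 + (μ - P) ^ 2) with hndef
    have hn0 : 0 < n := Real.sqrt_pos.mpr hn2
    have hn2' : n ^ 2 = R ^ 2 + (μ - P) ^ 2 := Real.sq_sqrt hn2.le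
    refine ⟨R / n, (μ - P) / n, μ, ?_, ?_, hform, h2μ⟩
    · field_simp
      linarith [hn2']
    · have hnum : P * R ^ 2 + 2 * R ^ 2 * (μ - P) + Q * (μ - P) ^ 2
          = μ * (R ^ 2 + (μ - P) ^ 2) := by linear_combination (-(μ - P)) * hchar
      have hrw : P * (R / n) ^ 2 + 2 * R * ((R / n) * ((μ - P) / n)) + Q * ((μ - P) / n) ^ 2
          = (P * R ^ 2 + 2 * R ^ 2 * (μ - P) + Q * (μ - P) ^ 2) / n ^ 2 := by ring
      rw [hrw, hnum, ← hn2', mul_div_assoc, div_self (by positivity : (n:ℝ) ^ 2 ≠ 0), mul_one]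

private lemma aux_L3 (p α β γ : ℝ) (hp0 : 0 < p) (hp : p ≤ 1.3) (hα0 : 0 ≤ α) (hβ0 : 0 ≤ β)
    (hγ0 : 0 ≤ γ) (hα1 : α ≤ 1) (hβα : β ≤ α) (hγα : γ ≤ α)
    (hcon : α ^ 2 + β ^ 2 + γ ^ 2 + 2 * (α * β * γ) = 1) :
    1 ≤ α ^ p + β ^ p + γ ^ p := by
  have hβ1 : β ≤ 1 := hβα.trans hα1
  have hγ1 : γ ≤ 1 := hγα.trans hα1
  by_cases hc : α ≤ 0.54
  · have hβc : β ≤ 0.54 := hβα.trans hc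
    have hγc : γ ≤ 0.54 := hγα.trans hc
    have hprod : α * β * γ ≤ 0.54 ^ 3 := by
      calc α * β * γ ≤ 0.54 * β * γ := by
            apply mul_le_mul_of_nonneg_right (mul_le_mul_of_nonneg_right hc hβ0) hγ0
        _ ≤ 0.54 * 0.54 * γ := by
            apply mul_le_mul_of_nonneg_right (mul_le_mul_of_nonneg_left hβc (by norm_num)) hγ0
        _ ≤ 0.54 * 0.54 * 0.54 := by
            apply mul_le_mul_of_nonneg_left hγc (by norm_num)
        _ = 0.54 ^ 3 := by ring
    have hsq : (0.685 : ℝ) ≤ α ^ 2 + β ^ 2 + γ ^ 2 := by nlinarith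
    set K : ℝ := (0.54 : ℝ) ^ (p - 2) with hK
    have hlow : ∀ x : ℝ, 0 ≤ x → x ≤ 0.54 → K * x ^ 2 ≤ x ^ p := by
      intro x hx0 hx54
      rcases eq_or_lt_of_le hx0 with h | h
      · rw [← h, show ((0:ℝ)) ^ p = 0 from Real.zero_rpow hp0.ne']
        norm_num
      · have hxp : x ^ p = x ^ 2 * x ^ (p - 2) := by
          rw [← Real.rpow_natCast x 2, ← Real.rpow_add h]
          norm_num
        rw [hxp]
        have h1 : x ^ (2 - p) ≤ (0.54 : ℝ) ^ (2 - p) :=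
          Real.rpow_le_rpow hx0 hx54 (by linarith)
        have hx2p : (0:ℝ) < x ^ (2 - p) := Real.rpow_pos_of_pos h _
        have h2 : K ≤ x ^ (p - 2) := by
          rw [hK, show p - 2 = -(2 - p) by ring, Real.rpow_neg (by norm_num : (0:ℝ) ≤ 0.54),
            Real.rpow_neg hx0]
          exact inv_anti₀ hx2p h1
        calc K * x ^ 2 ≤ x ^ (p - 2) * x ^ 2 := by
              apply mul_le_mul_of_nonneg_right h2 (by positivity)
          _ = x ^ 2 * x ^ (p - 2) := by ring
    have hKbig : (1:ℝ) / 0.685 ≤ K := by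
      have h1 : (0.54 : ℝ) ^ (2 - p) ≤ (0.54 : ℝ) ^ (0.7 : ℝ) :=
        Real.rpow_le_rpow_of_exponent_ge (by norm_num) (by norm_num) (by linarith)
      have h2 : (0.54 : ℝ) ^ (2 - p) ≤ 0.685 := h1.trans auxNL2
      have h3 : (0:ℝ) < (0.54 : ℝ) ^ (2 - p) := Real.rpow_pos_of_pos (by norm_num) _
      rw [hK, show p - 2 = -(2 - p) by ring, Real.rpow_neg (by norm_num : (0:ℝ) ≤ 0.54), one_div]
      exact inv_anti₀ h3 h2
    nlinarith [hlow α hα0 hc, hlow β hβ0 hβc, hlow γ hγ0 hγc,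
      mul_le_mul hKbig hsq (by norm_num) (le_trans (by norm_num) hKbig)]
  · push_neg at hc
    have hβγ : 1 - α ≤ β ^ 2 + γ ^ 2 := by
      nlinarith [mul_nonneg hα0 (sq_nonneg (β - γ))]
    have hbg : (1 - α) ^ (p / 2) ≤ β ^ p + γ ^ p := by
      have h1 : (1 - α) ^ (p / 2) ≤ (β ^ 2 + γ ^ 2) ^ (p / 2) :=
        Real.rpow_le_rpow (by linarith) hβγ (by linarith)
      have h2 : (β ^ 2 + γ ^ 2) ^ (p / 2) ≤ (β ^ 2) ^ (p / 2) + (γ ^ 2) ^ (p / 2) :=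
        real_rpow_subadd (by positivity) (by positivity) (by linarith) (by linarith)
      have h3 : (β ^ 2) ^ (p / 2) = β ^ p := by
        rw [← Real.rpow_natCast β 2, ← Real.rpow_mul hβ0,
          show ((2:ℕ):ℝ) * (p / 2) = p by push_cast; ring]
      have h4 : (γ ^ 2) ^ (p / 2) = γ ^ p := by
        rw [← Real.rpow_natCast γ 2, ← Real.rpow_mul hγ0,
          show ((2:ℕ):ℝ) * (p / 2) = p by push_cast; ring]
      rw [h3, h4] at h2
      linarith
    rcases eq_or_lt_of_le hα1 with hα1' | hα1'
    · have h1 : α ^ p = 1 := by rw [hα1']; exact Real.one_rpow p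
      have hb : (0:ℝ) ≤ β ^ p := Real.rpow_nonneg hβ0 _
      have hg : (0:ℝ) ≤ γ ^ p := Real.rpow_nonneg hγ0 _
      linarith
    · have hε0 : (0:ℝ) < 1 - α := by linarith
      have hε46 : 1 - α ≤ 0.46 := by linarith
      have hε1 : 1 - α ≤ 1 := by linarith
      rcases le_total p 1 with hple | hpgt
      · have hαp : α ≤ α ^ p := by
          have := Real.rpow_le_rpow_of_exponent_ge (by linarith : (0:ℝ) < α) hα1 hple
          rwa [Real.rpow_one] at this
        have hεp : 1 - α ≤ (1 - α) ^ (p / 2) := by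
          have := Real.rpow_le_rpow_of_exponent_ge hε0 hε1 (by linarith : p / 2 ≤ 1)
          rwa [Real.rpow_one] at this
        linarith
      · have hbern : 1 - p * (1 - α) ≤ α ^ p := by
          have := one_add_mul_self_le_rpow_one_add (by linarith : (-1:ℝ) ≤ -(1 - α)) hpgt
          rw [show (1:ℝ) + -(1 - α) = α by ring] at this
          linarith
        have hsmall : (1 - α) ^ (1 - p / 2) ≤ 10 / 13 := by
          have h1 : (1 - α) ^ (1 - p / 2) ≤ (1 - α) ^ (0.35 : ℝ) :=
            Real.rpow_le_rpow_of_exponent_ge hε0 hε1 (by norm_num; linarith)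
          have h2 : (1 - α) ^ (0.35 : ℝ) ≤ (0.46 : ℝ) ^ (0.35 : ℝ) :=
            Real.rpow_le_rpow hε0.le hε46 (by norm_num)
          exact (h1.trans h2).trans auxNL1
        have hpε : p * (1 - α) ≤ (1 - α) ^ (p / 2) := by
          have hmul : p * (1 - α) ^ (1 - p / 2) ≤ 1 := by
            calc p * (1 - α) ^ (1 - p / 2) ≤ 1.3 * (10 / 13) := by
                  apply mul_le_mul hp hsmall (Real.rpow_nonneg hε0.le _) (by norm_num)
              _ = 1 := by norm_num
          have hprod2 : (1 - α) ^ (p / 2) * (1 - α) ^ (1 - p / 2) = 1 - α := by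
            rw [← Real.rpow_add hε0]
            norm_num
          have h5 : p * ((1 - α) ^ (p / 2) * (1 - α) ^ (1 - p / 2)) = p * (1 - α) := by
            rw [hprod2]
          have h6 := mul_le_mul_of_nonneg_left hmul (Real.rpow_nonneg hε0.le (p / 2))
          nlinarith [h5, h6]
        linarith

private lemma aux_gram3 (a0 b0 a1 b1 a2 b2 : ℝ) (h0 : a0 ^ 2 + b0 ^ 2 = 1)
    (h1 : a1 ^ 2 + b1 ^ 2 = 1) (h2 : a2 ^ 2 + b2 ^ 2 = 1) :
    (a0 * a1 + b0 * b1) ^ 2 + (a0 * a2 + b0 * b2) ^ 2 + (a1 * a2 + b1 * b2) ^ 2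
      = 1 + 2 * ((a0 * a1 + b0 * b1) * (a0 * a2 + b0 * b2) * (a1 * a2 + b1 * b2)) := by
  linear_combination ((a1 ^ 2 + b1 ^ 2) * (a2 ^ 2 + b2 ^ 2) - (a1 * a2 + b1 * b2) ^ 2) * h0 +
    ((a2 ^ 2 + b2 ^ 2) - (a0 * a2 + b0 * b2) ^ 2) * h1 + (1 - (a0 * a1 + b0 * b1) ^ 2) * h2

private lemma aux_core (N : ℕ) (hN : 5 ≤ N) (hodd : Odd N) (q : ℝ) (hq : 0.7 ≤ q)
    (c s : Fin N → ℝ) (hu : ∀ i, c i ^ 2 + s i ^ 2 = 1) :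
    1 ≤ (∑ i, c i) ^ 2 + (∑ i, s i) ^ 2
      + q / 2 * ((∑ i, c i ^ 2) * (∑ i, s i ^ 2) - (∑ i, c i * s i) ^ 2) := by
  classical
  have hN5 : (5:ℝ) ≤ (N:ℝ) := by exact_mod_cast hN
  obtain ⟨e1, e2, μ, he, hμdef, hform, h2μ⟩ := aux_eigen (∑ i, c i ^ 2) (∑ i, s i ^ 2)
    (∑ i, c i * s i)
  set P := ∑ i, c i ^ 2
  set Q := ∑ i, s i ^ 2
  set R := ∑ i, c i * s i
  have hPQN : P + Q = (N:ℝ) := by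
    rw [← Finset.sum_add_distrib]
    rw [Finset.sum_congr rfl (fun i _ => hu i), Finset.sum_const, Finset.card_univ,
      Fintype.card_fin, nsmul_eq_mul, mul_one]
  -- σ and τ
  set σ : Fin N → ℝ := fun i => c i * e1 + s i * e2 with hσ
  set τ : Fin N → ℝ := fun i => s i * e1 - c i * e2 with hτ
  have hμσ : ∑ i, σ i ^ 2 = μ := by
    have : ∀ i, σ i ^ 2 = c i ^ 2 * e1 ^ 2 + (c i * s i) * (2 * (e1 * e2)) + s i ^ 2 * e2 ^ 2 := by
      intro i; simp only [hσ]; ring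
    rw [Finset.sum_congr rfl (fun i _ => this i), Finset.sum_add_distrib, Finset.sum_add_distrib,
      ← Finset.sum_mul, ← Finset.sum_mul, ← Finset.sum_mul, hμdef]
    ring
  have hμ0 : 0 ≤ μ := by
    rw [← hμσ]; exact Finset.sum_nonneg fun i _ => sq_nonneg _
  have hτσ : ∀ i, σ i ^ 2 + τ i ^ 2 = 1 := by
    intro i
    simp only [hσ, hτ]
    linear_combination (e1 ^ 2 + e2 ^ 2) * hu i + he
  have hτsum : ∑ i, τ i = (∑ i, s i) * e1 - (∑ i, c i) * e2 := by
    simp only [hτ]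
    rw [Finset.sum_sub_distrib, ← Finset.sum_mul, ← Finset.sum_mul]
  have hXτ : (∑ i, τ i) ^ 2 ≤ (∑ i, c i) ^ 2 + (∑ i, s i) ^ 2 := by
    rw [hτsum]
    nlinarith [sq_nonneg ((∑ i, s i) * e2 + (∑ i, c i) * e1), he,
      sq_nonneg ((∑ i, s i) * e1 - (∑ i, c i) * e2)]
  clear_value P Q R σ τ
  have hμform : P * Q - R ^ 2 = μ * ((N:ℝ) - μ) := by
    rw [← hPQN]; linarith [hform]
  rcases le_or_gt μ 1 with hμ1 | hμ1
  · -- parity case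
    set ε : Fin N → ℝ := fun i => if 0 ≤ τ i then 1 else -1 with hε
    have hεpm : ∀ i, ε i = 1 ∨ ε i = -1 := by
      intro i; simp only [hε]; split <;> simp
    have hεabs : ∀ i, ε i * |τ i| = τ i := by
      intro i
      simp only [hε]
      rcases le_or_gt 0 (τ i) with h | h
      · rw [if_pos h, abs_of_nonneg h, one_mul]
      · rw [if_neg (not_le.mpr h), abs_of_neg h]; ring
    have hτ1 : ∀ i, |τ i| ≤ 1 := by
      intro i
      have := hτσ i
      have h1 : τ i ^ 2 ≤ 1 := by nlinarith [sq_nonneg (σ i)]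
      nlinarith [abs_nonneg (τ i), sq_abs (τ i)]
    have habs : ∀ i, |τ i| = Real.sqrt (1 - σ i ^ 2) := by
      intro i
      rw [← Real.sqrt_sq_eq_abs]
      congr 1
      linarith [hτσ i]
    have hsup : ∑ i, (1 - Real.sqrt (1 - σ i ^ 2)) ≤ 1 - Real.sqrt (1 - μ) := by
      have := aux_superadd Finset.univ (fun i => σ i ^ 2) (fun i _ => sq_nonneg _)
        (by rw [hμσ]; exact hμ1)
      rwa [hμσ] at this
    have hτlow : Real.sqrt (1 - μ) ≤ |∑ i, τ i| := by
      have hdecomp : ∑ i, τ i = (∑ i, ε i) - ∑ i, ε i * (1 - |τ i|) := by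
        rw [← Finset.sum_sub_distrib]
        apply Finset.sum_congr rfl
        intro i _
        linear_combination (-1 : ℝ) * hεabs i
      have habs2 : |∑ i, ε i * (1 - |τ i|)| ≤ ∑ i, (1 - |τ i|) := by
        calc |∑ i, ε i * (1 - |τ i|)| ≤ ∑ i, |ε i * (1 - |τ i|)| :=
              Finset.abs_sum_le_sum_abs _ _
          _ = ∑ i, (1 - |τ i|) := by
              apply Finset.sum_congr rfl
              intro i _
              have hε1 : |ε i| = 1 := by
                rcases hεpm i with h | h <;> rw [h] <;> norm_num
              rw [abs_mul, hε1, one_mul, abs_of_nonneg (by linarith [hτ1 i] : (0:ℝ) ≤ 1 - |τ i|)]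
      have hpm := aux_pm N hodd ε hεpm
      have hsum2 : ∑ i, (1 - |τ i|) ≤ 1 - Real.sqrt (1 - μ) := by
        calc ∑ i, (1 - |τ i|) = ∑ i, (1 - Real.sqrt (1 - σ i ^ 2)) := by
              apply Finset.sum_congr rfl; intro i _; rw [habs i]
          _ ≤ 1 - Real.sqrt (1 - μ) := hsup
      have habs3 := abs_sub_abs_le_abs_sub (∑ i, ε i) (∑ i, ε i * (1 - |τ i|))
      rw [← hdecomp] at habs3
      linarith [hpm, habs2, hsum2, habs3]
    have hτ2 : 1 - μ ≤ (∑ i, τ i) ^ 2 := by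
      have h1 := Real.sq_sqrt (by linarith : (0:ℝ) ≤ 1 - μ)
      have h2 : Real.sqrt (1 - μ) ^ 2 ≤ |∑ i, τ i| ^ 2 := by
        apply pow_le_pow_left₀ (Real.sqrt_nonneg _) hτlow
      rw [h1, sq_abs] at h2
      exact h2
    have hstep : 1 ≤ q / 2 * ((N:ℝ) - μ) := by
      have h4 : (0.7:ℝ) * 4 ≤ q * ((N:ℝ) - μ) :=
        mul_le_mul hq (by linarith : (4:ℝ) ≤ (N:ℝ) - μ) (by norm_num) (by linarith)
      linarith
    have hgain : μ ≤ q / 2 * (μ * ((N:ℝ) - μ)) := by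
      nlinarith [mul_nonneg hμ0 (by linarith : (0:ℝ) ≤ q / 2 * ((N:ℝ) - μ) - 1)]
    have h9 : q / 2 * (P * Q - R ^ 2) = q / 2 * (μ * ((N:ℝ) - μ)) := by rw [hμform]
    linarith [hXτ, hτ2, hgain, h9]
  · -- μ > 1
    have hgain : 1 ≤ q / 2 * (μ * ((N:ℝ) - μ)) := by
      have hμN2 : 2 * μ ≤ (N:ℝ) := by rw [← hPQN]; exact h2μ
      have h1 : (N:ℝ) - 1 ≤ μ * ((N:ℝ) - μ) := by nlinarith
      nlinarith
    have h9 : q / 2 * (P * Q - R ^ 2) = q / 2 * (μ * ((N:ℝ) - μ)) := by rw [hμform]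
    linarith [hgain, h9, sq_nonneg (∑ i, c i), sq_nonneg (∑ i, s i)]

private lemma aux_sums (N : ℕ) (p : ℝ) (hp0 : 0 < p) (hp : p ≤ 1.3)
    (a b : Fin N → ℝ) (hu : ∀ i, a i ^ 2 + b i ^ 2 = 1) :
    ((N : ℝ) ^ 2 + ((∑ i, (a i ^ 2 - b i ^ 2)) ^ 2 + (∑ i, 2 * a i * b i) ^ 2)) / 2
      + (2 - p) / 4 * ((∑ i, (a i ^ 2 - b i ^ 2) ^ 2) * (∑ i, (2 * a i * b i) ^ 2)
          - (∑ i, (a i ^ 2 - b i ^ 2) * (2 * a i * b i)) ^ 2) - N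
    ≤ ∑ i, ∑ j, if i = j then 0 else |a i * a j + b i * b j| ^ p := by
  classical
  set c : Fin N → ℝ := fun i => a i ^ 2 - b i ^ 2 with hc
  set s : Fin N → ℝ := fun i => 2 * a i * b i with hs
  set t : Fin N → Fin N → ℝ := fun i j => a i * a j + b i * b j with htdef
  have ht1 : ∀ i j, t i j ^ 2 ≤ 1 := by
    intro i j
    have h := sq_nonneg (a i * b j - a j * b i)
    have h2 : t i j ^ 2 + (a i * b j - a j * b i) ^ 2 = 1 := by
      simp only [htdef]
      linear_combination (a j ^ 2 + b j ^ 2) * hu i + hu j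
    linarith
  have htii : ∀ i, t i i = 1 := by
    intro i
    simp only [htdef]
    linear_combination hu i
  have e1 : ∀ i j, t i j ^ 2 = (1 + (c i * c j + s i * s j)) / 2 := by
    intro i j
    simp only [htdef, hc, hs]
    linear_combination ((a j ^ 2 + b j ^ 2) / 2) * hu i + (1 / 2) * hu j
  -- pointwise lower bound with expanded right-hand side
  have key : ∀ i j, (1:ℝ)/2 + (2-p)/8 + (1/2) * (c i * c j) + (1/2) * (s i * s j)
      - (2-p)/8 * (c i ^ 2 * c j ^ 2) - (2-p)/4 * ((c i * s i) * (c j * s j))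
      - (2-p)/8 * (s i ^ 2 * s j ^ 2) - (if i = j then (1:ℝ) else 0)
      ≤ (if i = j then (0:ℝ) else |t i j| ^ p) := by
    intro i j
    have hGeq : (1:ℝ)/2 + (2-p)/8 + (1/2) * (c i * c j) + (1/2) * (s i * s j)
        - (2-p)/8 * (c i ^ 2 * c j ^ 2) - (2-p)/4 * ((c i * s i) * (c j * s j))
        - (2-p)/8 * (s i ^ 2 * s j ^ 2)
        = t i j ^ 2 + (2 - p) / 2 * (t i j ^ 2 * (1 - t i j ^ 2)) := by
      linear_combination (-(1 + (2-p)/2 - (2-p)/2 * (t i j ^ 2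
        + (1 + (c i * c j + s i * s j)) / 2))) * e1 i j
    by_cases h : i = j
    · subst h
      rw [if_pos rfl, if_pos rfl, hGeq, htii i]
      norm_num
    · rw [if_neg h, if_neg h, hGeq]
      linarith [aux_pointwise p (t i j) hp0 hp (ht1 i j)]
  have hsum := Finset.sum_le_sum
    (fun i (_ : i ∈ Finset.univ) => Finset.sum_le_sum (fun j (_ : j ∈ Finset.univ) => key i j))
  -- compute the left double sum
  have hdiag : ∑ i : Fin N, ∑ j : Fin N, (if i = j then (1:ℝ) else 0) = N := by
    have : ∀ i : Fin N, ∑ j : Fin N, (if i = j then (1:ℝ) else 0) = 1 := by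
      intro i
      rw [Finset.sum_ite_eq Finset.univ i (fun _ => (1:ℝ))]
      simp
    rw [Finset.sum_congr rfl fun i _ => this i]
    simp
  have hsplit : ∑ i : Fin N, ∑ j : Fin N, ((1:ℝ)/2 + (2-p)/8 + (1/2) * (c i * c j)
      + (1/2) * (s i * s j) - (2-p)/8 * (c i ^ 2 * c j ^ 2)
      - (2-p)/4 * ((c i * s i) * (c j * s j)) - (2-p)/8 * (s i ^ 2 * s j ^ 2)
      - (if i = j then (1:ℝ) else 0))
      = ((N:ℝ) ^ 2) * ((1:ℝ)/2 + (2-p)/8) + (1/2) * (∑ i, c i) ^ 2 + (1/2) * (∑ i, s i) ^ 2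
      - (2-p)/8 * (∑ i, c i ^ 2) ^ 2 - (2-p)/4 * (∑ i, c i * s i) ^ 2
      - (2-p)/8 * (∑ i, s i ^ 2) ^ 2 - N := by
    simp only [Finset.sum_add_distrib, Finset.sum_sub_distrib, ← Finset.mul_sum,
      ← Finset.sum_mul, hdiag]
    simp only [Finset.sum_const, Finset.card_univ, Fintype.card_fin, nsmul_eq_mul, mul_one]
    ring
  rw [hsplit] at hsum
  have hPQN : (∑ i, c i ^ 2) + (∑ i, s i ^ 2) = (N : ℝ) := by
    rw [← Finset.sum_add_distrib]
    have h1 : ∀ i : Fin N, c i ^ 2 + s i ^ 2 = 1 := by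
      intro i
      simp only [hc, hs]
      linear_combination (a i ^ 2 + b i ^ 2 + 1) * hu i
    rw [Finset.sum_congr rfl fun i _ => h1 i, Finset.sum_const, Finset.card_univ,
      Fintype.card_fin, nsmul_eq_mul, mul_one]
  have hfinal : ((N : ℝ) ^ 2 + ((∑ i, c i) ^ 2 + (∑ i, s i) ^ 2)) / 2
      + (2 - p) / 4 * ((∑ i, c i ^ 2) * (∑ i, s i ^ 2) - (∑ i, c i * s i) ^ 2) - N
      = ((N:ℝ) ^ 2) * ((1:ℝ)/2 + (2-p)/8) + (1/2) * (∑ i, c i) ^ 2 + (1/2) * (∑ i, s i) ^ 2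
      - (2-p)/8 * (∑ i, c i ^ 2) ^ 2 - (2-p)/4 * (∑ i, c i * s i) ^ 2
      - (2-p)/8 * (∑ i, s i ^ 2) ^ 2 - N := by
    linear_combination ((2-p)/8 * ((N:ℝ) + (∑ i, c i ^ 2) + (∑ i, s i ^ 2))) * hPQN
  rw [← hfinal] at hsum
  exact hsum

/-- For the Gram matrix `A` of `N` unit vectors in the plane and `p ∈ (0, 1.3]`, the
`p`-frame energy satisfies `E_p(A) ≥ N(N-2)/2` for even `N` and `E_p(A) ≥ (N-1)²/2`
for odd `N`. -/
theorem pFrameEnergy_plane (N : ℕ) (x : Fin N → EuclideanSpace ℝ (Fin 2))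
    (hx : ∀ i, ‖x i‖ = 1) (p : ℝ) (hp0 : 0 < p) (hp : p ≤ 1.3) :
    (Even N →
      (N : ℝ) * ((N : ℝ) - 2) / 2 ≤ ∑ i, ∑ j, if i = j then 0 else |⟪x i, x j⟫| ^ p) ∧
    (Odd N →
      ((N : ℝ) - 1) ^ 2 / 2 ≤ ∑ i, ∑ j, if i = j then 0 else |⟪x i, x j⟫| ^ p) := by
  classical
  set a : Fin N → ℝ := fun i => x i 0 with ha
  set b : Fin N → ℝ := fun i => x i 1 with hb
  have hunit : ∀ i, a i ^ 2 + b i ^ 2 = 1 := by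
    intro i
    have h2 : ⟪x i, x i⟫ = ‖x i‖ ^ 2 := real_inner_self_eq_norm_sq (x i)
    rw [hx i] at h2
    simp only [PiLp.inner_apply, RCLike.inner_apply, Fin.sum_univ_two, conj_trivial,
      one_pow] at h2
    simp only [ha, hb]
    nlinarith [h2]
  have hinner : ∀ i j, ⟪x i, x j⟫ = a i * a j + b i * b j := by
    intro i j
    simp [PiLp.inner_apply, RCLike.inner_apply, Fin.sum_univ_two, ha, hb]
    ring
  have hE : (∑ i, ∑ j, if i = j then (0:ℝ) else |⟪x i, x j⟫| ^ p)
      = ∑ i, ∑ j, if i = j then (0:ℝ) else |a i * a j + b i * b j| ^ p := by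
    apply Finset.sum_congr rfl; intro i _
    apply Finset.sum_congr rfl; intro j _
    rw [hinner i j]
  -- Cauchy-Schwarz for the quartic sums
  have hCS : (∑ i, (a i ^ 2 - b i ^ 2) * (2 * a i * b i)) ^ 2
      ≤ (∑ i, (a i ^ 2 - b i ^ 2) ^ 2) * (∑ i, (2 * a i * b i) ^ 2) :=
    Finset.sum_mul_sq_le_sq_mul_sq Finset.univ _ _
  have hq7 : (0.7 : ℝ) ≤ 2 - p := by norm_num at hp ⊢; linarith
  have hsums := aux_sums N p hp0 hp a b hunit
  constructor
  · -- even (works for every N)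
    intro _
    rw [hE]
    have h1 : (0:ℝ) ≤ (∑ i, (a i ^ 2 - b i ^ 2)) ^ 2 + (∑ i, 2 * a i * b i) ^ 2 := by positivity
    nlinarith [hsums, hCS, hq7]
  · intro hodd
    have hcases : N = 1 ∨ N = 3 ∨ 5 ≤ N := by
      rw [Nat.odd_iff] at hodd
      omega
    rcases hcases with h1 | h3 | h5
    · subst h1
      simp
    · subst h3
      rw [hE]
      simp only [Fin.sum_univ_three]
      norm_num [Fin.ext_iff]
      rw [show a 1 * a 0 + b 1 * b 0 = a 0 * a 1 + b 0 * b 1 from by ring,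
        show a 2 * a 0 + b 2 * b 0 = a 0 * a 2 + b 0 * b 2 from by ring,
        show a 2 * a 1 + b 2 * b 1 = a 1 * a 2 + b 1 * b 2 from by ring]
      set u : ℝ := a 0 * a 1 + b 0 * b 1 with hu
      set v : ℝ := a 0 * a 2 + b 0 * b 2 with hv
      set w : ℝ := a 1 * a 2 + b 1 * b 2 with hw
      have hgram : u ^ 2 + v ^ 2 + w ^ 2 = 1 + 2 * (u * v * w) :=
        aux_gram3 (a 0) (b 0) (a 1) (b 1) (a 2) (b 2) (hunit 0) (hunit 1) (hunit 2)
      have hsq : ∀ (i j : Fin 3), (a i * a j + b i * b j) ^ 2 ≤ 1 := by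
        intro i j
        have h2 : (a i * a j + b i * b j) ^ 2 + (a i * b j - a j * b i) ^ 2 = 1 := by
          linear_combination (a j ^ 2 + b j ^ 2) * hunit i + hunit j
        nlinarith [sq_nonneg (a i * b j - a j * b i)]
      have hu2 : u ^ 2 ≤ 1 := hsq 0 1
      have hv2 : v ^ 2 ≤ 1 := hsq 0 2
      have hw2 : w ^ 2 ≤ 1 := hsq 1 2
      have key : 1 ≤ |u| ^ p + |v| ^ p + |w| ^ p := by
        rcases le_or_gt 0 (u * v * w) with hρ | hρ
        · have l1 : ∀ z : ℝ, z ^ 2 ≤ 1 → z ^ 2 ≤ |z| ^ p := by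
            intro z hz
            nlinarith [aux_pointwise p z hp0 hp hz,
              mul_nonneg (mul_nonneg (by linarith [hq7] : (0:ℝ) ≤ (2 - p) / 2) (sq_nonneg z))
                (by nlinarith : (0:ℝ) ≤ 1 - z ^ 2)]
          nlinarith [l1 u hu2, l1 v hv2, l1 w hw2]
        · have habsmul : |u| * |v| * |w| = -(u * v * w) := by
            rw [← abs_mul, ← abs_mul, abs_of_neg hρ]
          have hcon : |u| ^ 2 + |v| ^ 2 + |w| ^ 2 + 2 * (|u| * |v| * |w|) = 1 := by
            rw [sq_abs, sq_abs, sq_abs, habsmul]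
            linarith [hgram]
          have hA1 : |u| ≤ 1 := abs_le.mpr ⟨by nlinarith, by nlinarith⟩
          have hB1 : |v| ≤ 1 := abs_le.mpr ⟨by nlinarith, by nlinarith⟩
          have hC1 : |w| ≤ 1 := abs_le.mpr ⟨by nlinarith, by nlinarith⟩
          have hA0 := abs_nonneg u
          have hB0 := abs_nonneg v
          have hC0 := abs_nonneg w
          rcases le_total |u| |v| with hab | hab
          · rcases le_total |v| |w| with hbc | hbc
            · have := aux_L3 p (|w|) (|u|) (|v|) hp0 hp hC0 hA0 hB0 hC1
                (hab.trans hbc) hbc (by linear_combination hcon)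
              linarith
            · have := aux_L3 p (|v|) (|u|) (|w|) hp0 hp hB0 hA0 hC0 hB1
                hab hbc (by linear_combination hcon)
              linarith
          · rcases le_total |u| |w| with hac | hac
            · have := aux_L3 p (|w|) (|v|) (|u|) hp0 hp hC0 hB0 hA0 hC1
                (hab.trans hac) hac (by linear_combination hcon)
              linarith
            · have := aux_L3 p (|u|) (|v|) (|w|) hp0 hp hA0 hB0 hC0 hA1
                hab hac (by linear_combination hcon)
              linarith
      norm_num
      linarith
    · -- N ≥ 5 odd
      rw [hE]
      have hcore := aux_core N h5 hodd (2 - p) hq7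
        (fun i => a i ^ 2 - b i ^ 2) (fun i => 2 * a i * b i)
        (by
          intro i
          linear_combination (a i ^ 2 + b i ^ 2 + 1) * hunit i)
      nlinarith [hsums, hcore]
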